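/- For every k ≥ 1 and M ≥ 1, set N = k · M and T = M^k. Then for every Decision Maker strategy σ there exists an approval profile sequence S : Fin T → Fin N → Finset (Fin k) whose conflict number is at most 1, such that in the play of σ against S some agent has dissatisfaction at least M^(k-1)/k = T^((k-1)/k)/k. -/

import Mathlib

open Finset

/-- The option chosen by strategy `σ` against the approval profile sequence `S`
in round `r`: `σ` applied to the history `[S 0, …, S r]`. -/
def play {k N T : ℕ} (σ : List (Fin N → Finset (Fin k)) → Fin k)
    (S : Fin T → Fin N → Finset (Fin k)) (r : Fin T) : Fin k :=
  σ (List.ofFn (fun j : Fin (r.val + 1) => S (Fin.castLE r.isLt j)))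

/-- The dissatisfaction of agent `i` in the play of `σ` against `S`:
the number of rounds in which the chosen option is not approved by `i`. -/
def dissat {k N T : ℕ} (σ : List (Fin N → Finset (Fin k)) → Fin k)
    (S : Fin T → Fin N → Finset (Fin k)) (i : Fin N) : ℕ :=
  (Finset.univ.filter fun r : Fin T => play σ S r ∉ S r i).card

/-- The conflict number of `S` is at most `C`: every subset `A` of agents of size
at most `k` is in a conflict (no option satisfies everyone in `A`) in at most `C` rounds. -/
def conflictNumberLe {k N T : ℕ} (S : Fin T → Fin N → Finset (Fin k)) (C : ℕ) : Prop :=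
  ∀ A : Finset (Fin N), A.card ≤ k →
    (Finset.univ.filter fun r : Fin T => ¬ ∃ θ : Fin k, ∀ i ∈ A, θ ∈ S r i).card ≤ C

/-- Two numbers below `M^k` with the same base-`M` digits are equal. -/
lemma digits_determine (M : ℕ) (hM : 1 ≤ M) :
    ∀ (k : ℕ) (n n' : ℕ), n < M ^ k → n' < M ^ k →
      (∀ t, t < k → n / M ^ t % M = n' / M ^ t % M) → n = n' := by
  intro k
  induction k with
  | zero =>
      intro n n' hn hn' _
      simp only [pow_zero, Nat.lt_one_iff] at hn hn'
      omega
  | succ k ih =>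
      intro n n' hn hn' hd
      have h0 : n % M = n' % M := by
        have := hd 0 (Nat.succ_pos k)
        simpa using this
      have hdiv : n / M = n' / M := by
        apply ih
        · exact Nat.div_lt_of_lt_mul (by rwa [← pow_succ'])
        · exact Nat.div_lt_of_lt_mul (by rwa [← pow_succ'])
        · intro t ht
          have e1 : n / M / M ^ t = n / M ^ (t + 1) := by
            rw [Nat.div_div_eq_div_mul, ← pow_succ']
          have e2 : n' / M / M ^ t = n' / M ^ (t + 1) := by
            rw [Nat.div_div_eq_div_mul, ← pow_succ']
          rw [e1, e2]
          exact hd (t + 1) (by omega)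
      rw [← Nat.div_add_mod n M, ← Nat.div_add_mod n' M, hdiv, h0]

theorem one_conflict_lower_bound (k M : ℕ) (hk : 1 ≤ k) (hM : 1 ≤ M)
    (σ : List (Fin (k * M) → Finset (Fin k)) → Fin k) :
    ∃ S : Fin (M ^ k) → Fin (k * M) → Finset (Fin k),
      conflictNumberLe S 1 ∧
      ∃ i : Fin (k * M),
        (M : ℝ) ^ (k - 1) / (k : ℝ) ≤ (dissat σ S i : ℝ) := by
  have hMpos : 0 < M := hM
  -- group of agent i
  have hgrp : ∀ i : Fin (k * M), i.val / M < k := by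
    intro i
    exact (Nat.div_lt_iff_lt_mul hMpos).2 i.isLt
  set S : Fin (M ^ k) → Fin (k * M) → Finset (Fin k) := fun r i =>
    if r.val / M ^ (i.val / M) % M = i.val % M
      then (univ : Finset (Fin k)) \ {⟨i.val / M, hgrp i⟩} else univ with hS
  -- characterize non-membership
  have hmem : ∀ (r : Fin (M ^ k)) (i : Fin (k * M)) (θ : Fin k),
      θ ∉ S r i ↔ (i.val / M = θ.val ∧ r.val / M ^ θ.val % M = i.val % M) := by
    intro r i θ
    rw [hS]
    simp only
    by_cases h : r.val / M ^ (i.val / M) % M = i.val % M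
    · simp only [h, if_true, mem_sdiff, mem_univ, true_and, mem_singleton, not_not]
      constructor
      · intro hθ
        have : i.val / M = θ.val := by rw [hθ]
        exact ⟨this, by rw [← this]; exact h⟩
      · intro ⟨h1, _⟩
        exact Fin.ext h1.symm
    · simp only [if_neg h, mem_univ, not_true, false_iff, not_and]
      intro h1 h2
      exact h (by rw [h1]; exact h2)
  refine ⟨S, ?_, ?_⟩
  · -- conflict number ≤ 1
    intro A hA
    rw [Finset.card_le_one]
    intro r hr r' hr'
    simp only [mem_filter, mem_univ, true_and] at hr hr'
    push_neg at hr hr'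
    -- extract witnesses
    choose f hfA hf using fun θ => hr θ
    choose f' hfA' hf' using fun θ => hr' θ
    simp only [hmem] at hf hf'
    have hfg : ∀ θ, (f θ).val / M = θ.val := fun θ => (hf θ).1
    have hfd : ∀ θ, r.val / M ^ θ.val % M = (f θ).val % M := fun θ => (hf θ).2
    have hfg' : ∀ θ, (f' θ).val / M = θ.val := fun θ => (hf' θ).1
    have hfd' : ∀ θ, r'.val / M ^ θ.val % M = (f' θ).val % M := fun θ => (hf' θ).2
    have hfinj : Function.Injective f := by
      intro a b hab
      apply Fin.ext
      rw [← hfg a, ← hfg b, hab]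
    -- digits of r and r' agree
    have hdig : ∀ t, t < k → r.val / M ^ t % M = r'.val / M ^ t % M := by
      intro t ht
      by_contra hne
      set θ : Fin k := ⟨t, ht⟩ with hθ
      have hne' : f θ ≠ f' θ := by
        intro h
        apply hne
        have h1 := hfd θ
        have h2 := hfd' θ
        have hv : (θ : ℕ) = t := rfl
        rw [hv] at h1 h2
        rw [h1, h2, h]
      have hnotmem : f' θ ∉ Finset.image f univ := by
        intro hmem'
        obtain ⟨a, _, ha⟩ := Finset.mem_image.1 hmem'
        have : a = θ := by
          apply Fin.ext
          rw [← hfg a, ha, hfg' θ]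
        rw [this] at ha
        exact hne' ha
      have hsub : insert (f' θ) (Finset.image f univ) ⊆ A := by
        intro x hx
        rcases Finset.mem_insert.1 hx with h | h
        · rw [h]; exact hfA' θ
        · obtain ⟨a, _, ha⟩ := Finset.mem_image.1 h
          rw [← ha]; exact hfA a
      have hcard : k + 1 ≤ A.card := by
        have := Finset.card_le_card hsub
        rw [Finset.card_insert_of_notMem hnotmem,
          Finset.card_image_of_injective _ hfinj, Finset.card_univ,
          Fintype.card_fin] at this
        omega
      omega
    exact Fin.ext (digits_determine M hM k r.val r'.val r.isLt r'.isLt hdig)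
  · -- dissatisfaction bound
    -- in each round, the designated agent of the chosen option's group is dissatisfied
    have hwit : ∀ r : Fin (M ^ k), ∃ i : Fin (k * M), play σ S r ∉ S r i := by
      intro r
      set θ := play σ S r with hθ
      have hd : r.val / M ^ θ.val % M < M := Nat.mod_lt _ hMpos
      refine ⟨⟨M * θ.val + r.val / M ^ θ.val % M, ?_⟩, ?_⟩
      · calc M * θ.val + r.val / M ^ θ.val % M < M * θ.val + M := by omega
          _ = M * (θ.val + 1) := by ring
          _ ≤ M * k := Nat.mul_le_mul_left M θ.isLt
          _ = k * M := mul_comm M k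
      · rw [hmem]
        constructor
        · simp [Nat.mul_add_div hMpos, Nat.div_eq_of_lt hd]
        · simp [Nat.mul_add_mod, Nat.mod_eq_of_lt hd]
    have hsum : (M ^ k : ℕ) ≤ ∑ i : Fin (k * M), dissat σ S i := by
      have : ∑ i : Fin (k * M), dissat σ S i
          = ∑ r : Fin (M ^ k), (univ.filter fun i : Fin (k * M) => play σ S r ∉ S r i).card := by
        simp only [dissat, Finset.card_filter]
        rw [Finset.sum_comm]
      rw [this]
      calc (M ^ k : ℕ) = ∑ _r : Fin (M ^ k), 1 := by simp
        _ ≤ _ := by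
            apply Finset.sum_le_sum
            intro r _
            rw [Nat.one_le_iff_ne_zero, ← Nat.pos_iff_ne_zero, Finset.card_pos]
            obtain ⟨i, hi⟩ := hwit r
            exact ⟨i, Finset.mem_filter.2 ⟨Finset.mem_univ i, hi⟩⟩
    by_contra hcon
    push_neg at hcon
    have hlt : ∑ i : Fin (k * M), (dissat σ S i : ℝ)
        < ∑ _i : Fin (k * M), (M : ℝ) ^ (k - 1) / (k : ℝ) := by
      apply Finset.sum_lt_sum_of_nonempty
      · exact Finset.univ_nonempty_iff.2 (by
          constructor
          exact ⟨0, by positivity⟩)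
      · intro i _
        exact hcon i
    have hsum' : (M : ℝ) ^ k ≤ ∑ i : Fin (k * M), (dissat σ S i : ℝ) := by
      have := hsum
      calc (M : ℝ) ^ k = ((M ^ k : ℕ) : ℝ) := by push_cast; ring
        _ ≤ ((∑ i : Fin (k * M), dissat σ S i : ℕ) : ℝ) := by exact_mod_cast hsum
        _ = _ := by push_cast; ring
    have heq : ∑ _i : Fin (k * M), (M : ℝ) ^ (k - 1) / (k : ℝ) = (M : ℝ) ^ k := by
      rw [Finset.sum_const, Finset.card_univ, Fintype.card_fin]
      have hk0 : (k : ℝ) ≠ 0 := by positivity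
      have hpow : (M : ℝ) ^ k = (M : ℝ) ^ (k - 1) * M := by
        rw [← pow_succ]
        congr 1
        omega
      field_simp
      rw [hpow]
      rw [nsmul_eq_mul, Nat.cast_mul, mul_div_assoc', div_eq_iff hk0]
      ring
    rw [heq] at hlt
    linarith
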